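/- Let h_aff : ℝⁿ → ℝ be affine with gradient a, and let Σ be symmetric positive semidefinite. Then the condition h_aff(z) + ‖aᵀΣ^{1/2}‖₂ ≤ 0 holds if and only if h_aff(z + Σ^{1/2}γ) ≤ 0 for all γ in the closed unit ball of ℝⁿ. -/

import Mathlib

open Matrix

open scoped ComplexOrder in
/-- The old Mathlib `Matrix.PosSemidef.sqrt` (removed upstream), restated with its old definition. -/
noncomputable def Matrix.PosSemidef.sqrt {n 𝕜 : Type*} [Fintype n] [DecidableEq n] [RCLike 𝕜]
    {A : Matrix n n 𝕜} (hA : A.PosSemidef) : Matrix n n 𝕜 :=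
  hA.1.eigenvectorUnitary.1 * diagonal ((↑) ∘ (√·) ∘ hA.1.eigenvalues) *
  (star hA.1.eigenvectorUnitary : Matrix n n 𝕜)

noncomputable def eunorm {n : ℕ} (v : Fin n → ℝ) : ℝ := Real.sqrt (∑ i, v i ^ 2)

lemma eunorm_nonneg {n : ℕ} (v : Fin n → ℝ) : 0 ≤ eunorm v := Real.sqrt_nonneg _

lemma eunorm_sq {n : ℕ} (v : Fin n → ℝ) : eunorm v ^ 2 = ∑ i, v i ^ 2 :=
  Real.sq_sqrt (Finset.sum_nonneg fun i _ => sq_nonneg _)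

lemma dot_le_eunorm_mul {n : ℕ} (v w : Fin n → ℝ) :
    v ⬝ᵥ w ≤ eunorm v * eunorm w := by
  have h := Finset.sum_mul_sq_le_sq_mul_sq Finset.univ v w
  have h2 : v ⬝ᵥ w ≤ |∑ i, v i * w i| := le_abs_self _
  calc v ⬝ᵥ w ≤ |∑ i, v i * w i| := h2
    _ = Real.sqrt ((∑ i, v i * w i) ^ 2) := (Real.sqrt_sq_eq_abs _).symm
    _ ≤ Real.sqrt ((∑ i, v i ^ 2) * ∑ i, w i ^ 2) := Real.sqrt_le_sqrt h
    _ = eunorm v * eunorm w := Real.sqrt_mul (Finset.sum_nonneg fun i _ => sq_nonneg _) _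

theorem affine_backoff_iff {n : ℕ} (a z : Fin n → ℝ) (b : ℝ)
    (S : Matrix (Fin n) (Fin n) ℝ) (hS : S.PosSemidef) :
    (a ⬝ᵥ z + b + eunorm (a ᵥ* hS.sqrt) ≤ 0) ↔
    (∀ γ : Fin n → ℝ, eunorm γ ≤ 1 → a ⬝ᵥ (z + hS.sqrt *ᵥ γ) + b ≤ 0) := by
  set v : Fin n → ℝ := a ᵥ* hS.sqrt with hv
  constructor
  · intro h γ hγ
    have h1 : a ⬝ᵥ (hS.sqrt *ᵥ γ) = v ⬝ᵥ γ := dotProduct_mulVec a hS.sqrt γ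
    have h2 : v ⬝ᵥ γ ≤ eunorm v := by
      calc v ⬝ᵥ γ ≤ eunorm v * eunorm γ := dot_le_eunorm_mul v γ
        _ ≤ eunorm v * 1 := by
            exact mul_le_mul_of_nonneg_left hγ (eunorm_nonneg v)
        _ = eunorm v := mul_one _
    rw [dotProduct_add, h1]
    linarith
  · intro h
    rcases eq_or_lt_of_le (eunorm_nonneg v) with h0 | h0
    · have := h 0 (by simp [eunorm])
      rw [mulVec_zero, add_zero] at this
      linarith
    · set c := eunorm v with hc
      have := h (c⁻¹ • v) ?_
      · have h1 : a ⬝ᵥ (hS.sqrt *ᵥ (c⁻¹ • v)) = c⁻¹ * (v ⬝ᵥ v) := by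
          rw [dotProduct_mulVec, ← hv, dotProduct_smul]
          simp [smul_eq_mul]
        have h2 : v ⬝ᵥ v = c ^ 2 := by
          rw [hc, eunorm_sq]
          simp [dotProduct, sq]
        have h3 : c⁻¹ * (v ⬝ᵥ v) = c := by
          rw [h2, sq]
          field_simp
        rw [dotProduct_add, h1, h3] at this
        linarith
      · have : eunorm (c⁻¹ • v) = c⁻¹ * c := by
          simp only [eunorm, Pi.smul_apply, smul_eq_mul, mul_pow, ← Finset.mul_sum]
          rw [Real.sqrt_mul (by positivity), Real.sqrt_sq (by positivity), ← eunorm]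
        rw [this, inv_mul_cancel₀ (ne_of_gt h0)]
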